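/- Two quadrilateral cross-sections of different types in a tetrahedron must intersect: let Δ ⊆ ℝ³ be the convex hull of four affinely independent points v₀, v₁, v₂, v₃. Suppose the affine plane P₁ meets the interiors of edges v₀v₂, v₀v₃, v₁v₂, v₁v₃ (giving a quadrilateral Q₁ = P₁ ∩ Δ separating {v₀,v₁} from {v₂,v₃}), and the affine plane P₂ meets the interiors of edges v₀v₁, v₀v₃, v₁v₂, v₂v₃ (giving a quadrilateral Q₂ = P₂ ∩ Δ separating {v₀,v₂} from {v₁,v₃}). Then Q₁ ∩ Q₂ ≠ ∅. -/

import Mathlib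

/-- If a linear functional equals `c` somewhere on the open segment between `a`
and `b`, but not at `a` or `b`, then `a` and `b` are strictly separated. -/
lemma opposite_sides {E : Type*} [AddCommGroup E] [Module ℝ E]
    (f : E →ₗ[ℝ] ℝ) (c : ℝ) (a b : E)
    (ha : f a ≠ c) (hb : f b ≠ c)
    (h : ∃ x ∈ openSegment ℝ a b, f x = c) :
    (f a - c) * (f b - c) < 0 := by
  obtain ⟨x, hx, hfx⟩ := h
  rw [openSegment_eq_image] at hx
  obtain ⟨t, ⟨ht0, ht1⟩, rfl⟩ := hx
  simp only [map_add, map_smul, smul_eq_mul] at hfx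
  rcases lt_or_gt_of_ne (sub_ne_zero.mpr ha) with h1 | h1 <;>
    rcases lt_or_gt_of_ne (sub_ne_zero.mpr hb) with h2 | h2 <;>
    nlinarith [mul_pos ht0 (sub_pos.mpr ht1)]

/-- A point on the open segment between two points on the same strict side is
on that side. -/
lemma same_side {E : Type*} [AddCommGroup E] [Module ℝ E]
    (f : E →ₗ[ℝ] ℝ) (c : ℝ) (a b x : E)
    (hab : 0 < (f a - c) * (f b - c))
    (hx : x ∈ openSegment ℝ a b) :
    0 < (f x - c) * (f a - c) := by
  rw [openSegment_eq_image] at hx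
  obtain ⟨t, ⟨ht0, ht1⟩, rfl⟩ := hx
  simp only [map_add, map_smul, smul_eq_mul]
  rcases mul_pos_iff.mp hab with ⟨h1, h2⟩ | ⟨h1, h2⟩
  · exact mul_pos (by nlinarith) h1
  · exact mul_pos_of_neg_of_neg (by nlinarith) h1

/-- Two quadrilateral cross-sections of different types in a tetrahedron must
intersect: if `P₁ = {f₁ = c₁}` meets the interiors of edges `v₀v₂, v₀v₃, v₁v₂,
v₁v₃` and `P₂ = {f₂ = c₂}` meets the interiors of edges `v₀v₁, v₀v₃, v₁v₂,
v₂v₃`, then the quadrilaterals `Q₁ = P₁ ∩ Δ` and `Q₂ = P₂ ∩ Δ` meet, where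
`Δ` is the convex hull of the four vertices. -/
theorem quad_cross_sections_intersect (v : Fin 4 → EuclideanSpace ℝ (Fin 3))
    (hv : AffineIndependent ℝ v)
    (f₁ f₂ : EuclideanSpace ℝ (Fin 3) →ₗ[ℝ] ℝ) (c₁ c₂ : ℝ)
    (hf₁ : f₁ ≠ 0) (hf₂ : f₂ ≠ 0)
    (hvert₁ : ∀ i, f₁ (v i) ≠ c₁) (hvert₂ : ∀ i, f₂ (v i) ≠ c₂)
    (h102 : ∃ x ∈ openSegment ℝ (v 0) (v 2), f₁ x = c₁)
    (h103 : ∃ x ∈ openSegment ℝ (v 0) (v 3), f₁ x = c₁)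
    (h112 : ∃ x ∈ openSegment ℝ (v 1) (v 2), f₁ x = c₁)
    (h113 : ∃ x ∈ openSegment ℝ (v 1) (v 3), f₁ x = c₁)
    (h201 : ∃ x ∈ openSegment ℝ (v 0) (v 1), f₂ x = c₂)
    (h203 : ∃ x ∈ openSegment ℝ (v 0) (v 3), f₂ x = c₂)
    (h212 : ∃ x ∈ openSegment ℝ (v 1) (v 2), f₂ x = c₂)
    (h223 : ∃ x ∈ openSegment ℝ (v 2) (v 3), f₂ x = c₂) :
    (({x | f₁ x = c₁} ∩ convexHull ℝ (Set.range v)) ∩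
      ({x | f₂ x = c₂} ∩ convexHull ℝ (Set.range v))).Nonempty := by
  -- strict separation facts for f₁
  have s02 := opposite_sides f₁ c₁ (v 0) (v 2) (hvert₁ 0) (hvert₁ 2) h102
  have s12 := opposite_sides f₁ c₁ (v 1) (v 2) (hvert₁ 1) (hvert₁ 2) h112
  -- v 0 and v 1 are on the same side of P₁
  have h01 : 0 < (f₁ (v 0) - c₁) * (f₁ (v 1) - c₁) := by
    rcases mul_neg_iff.mp s02 with ⟨hA, hC⟩ | ⟨hA, hC⟩ <;>
      rcases mul_neg_iff.mp s12 with ⟨hB, hC'⟩ | ⟨hB, hC'⟩ <;>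
      first
        | exact mul_pos hA hB
        | exact mul_pos_of_neg_of_neg hA hB
        | linarith
  -- v 2 and v 3 are on the same side of P₁
  have s03 := opposite_sides f₁ c₁ (v 0) (v 3) (hvert₁ 0) (hvert₁ 3) h103
  have h23 : 0 < (f₁ (v 2) - c₁) * (f₁ (v 3) - c₁) := by
    rcases mul_neg_iff.mp s02 with ⟨hA, hC⟩ | ⟨hA, hC⟩ <;>
      rcases mul_neg_iff.mp s03 with ⟨hA', hD⟩ | ⟨hA', hD⟩ <;>
      first
        | exact mul_pos hC hD
        | exact mul_pos_of_neg_of_neg hC hD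
        | linarith
  -- pick the points on P₂
  obtain ⟨p, hp, hfp⟩ := h201
  obtain ⟨q, hq, hfq⟩ := h223
  have hpside := same_side f₁ c₁ (v 0) (v 1) p h01 hp
  have hqside := same_side f₁ c₁ (v 2) (v 3) q h23 hq
  -- p and q are on opposite sides of P₁
  have hpq : (f₁ p - c₁) * (f₁ q - c₁) < 0 := by nlinarith
  -- p and q lie in the convex hull
  have hΔ : Convex ℝ (convexHull ℝ (Set.range v)) := convex_convexHull ℝ _
  have hmem : ∀ i, v i ∈ convexHull ℝ (Set.range v) := fun i =>
    subset_convexHull ℝ _ ⟨i, rfl⟩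
  have hpΔ : p ∈ convexHull ℝ (Set.range v) :=
    hΔ.openSegment_subset (hmem 0) (hmem 1) hp
  have hqΔ : q ∈ convexHull ℝ (Set.range v) :=
    hΔ.openSegment_subset (hmem 2) (hmem 3) hq
  -- intermediate value construction on the segment [p, q]
  set a := f₁ p - c₁ with ha
  set b := f₁ q - c₁ with hb
  -- WLOG handling via two cases
  have key : ∀ p q : EuclideanSpace ℝ (Fin 3),
      p ∈ convexHull ℝ (Set.range v) → q ∈ convexHull ℝ (Set.range v) →
      f₂ p = c₂ → f₂ q = c₂ → f₁ p - c₁ < 0 → 0 < f₁ q - c₁ →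
      (({x | f₁ x = c₁} ∩ convexHull ℝ (Set.range v)) ∩
        ({x | f₂ x = c₂} ∩ convexHull ℝ (Set.range v))).Nonempty := by
    intro p q hpΔ hqΔ hfp hfq hpa hqb
    set a := f₁ p - c₁
    set b := f₁ q - c₁
    have hba : 0 < b - a := by linarith
    have hne : b - a ≠ 0 := hba.ne'
    set l : ℝ := b / (b - a) with hl
    have hl0 : 0 ≤ l := by positivity
    have hl1' : 1 - l = -a / (b - a) := by rw [hl]; field_simp; ring
    have hl1 : 0 ≤ 1 - l := by
      rw [hl1']; exact div_nonneg (by linarith) (by linarith)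
    refine ⟨l • p + (1 - l) • q, ⟨?_, ?_⟩, ?_, ?_⟩
    · show f₁ _ = c₁
      simp only [map_add, map_smul, smul_eq_mul]
      have hfp' : f₁ p = a + c₁ := by simp [a]
      have hfq' : f₁ q = b + c₁ := by simp [b]
      rw [hfp', hfq', hl1', hl]
      field_simp
      ring
    · exact hΔ hpΔ hqΔ hl0 hl1 (by ring)
    · show f₂ _ = c₂
      simp only [map_add, map_smul, smul_eq_mul, hfp, hfq]
      ring
    · exact hΔ hpΔ hqΔ hl0 hl1 (by ring)
  rcases mul_neg_iff.mp hpq with ⟨h1, h2⟩ | ⟨h1, h2⟩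
  · exact key q p hqΔ hpΔ hfq hfp h2 h1
  · exact key p q hpΔ hqΔ hfp hfq h1 h2
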